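/- Let q be a power of a prime p and let k be a positive integer. Set a = (q-1)/gcd(q-1,k) and b = (q+1)/gcd(q+1,k). Then the image of the induced Dickson map D̄_k : F_q → F_q has cardinality a/2 + b/2 + η(k,q), where η(k,q) = 0 if gcd(a,2) = gcd(b,2) and η(k,q) = 1/2 if gcd(a,2) ≠ gcd(b,2). -/

import Mathlib

open Polynomial Finset

/-- Image of the `k`-th power map on `m`-th roots of unity. -/
private lemma powImageAux {K : Type*} [Field K] [DecidableEq K] {m k : ℕ} (hm : 0 < m)
    {ζ : K} (hζ : IsPrimitiveRoot ζ m) :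
    (Polynomial.nthRootsFinset m (1 : K)).image (fun u => u ^ k)
      = Polynomial.nthRootsFinset (m / Nat.gcd m k) (1 : K) := by
  have hg : 0 < Nat.gcd m k := Nat.gcd_pos_of_pos_left _ hm
  set g := Nat.gcd m k with hgdef
  set a := m / g with hadef
  have hga : g * a = m := Nat.mul_div_cancel' (Nat.gcd_dvd_left m k)
  have ha : 0 < a := Nat.div_pos (Nat.le_of_dvd hm (Nat.gcd_dvd_left m k)) hg
  ext w
  simp only [Finset.mem_image, Polynomial.mem_nthRootsFinset hm, Polynomial.mem_nthRootsFinset ha]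
  constructor
  · rintro ⟨u, hu, rfl⟩
    have hdk : g ∣ k := Nat.gcd_dvd_right m k
    calc (u ^ k) ^ a = u ^ (k * a) := by rw [← pow_mul]
    _ = (u ^ m) ^ (k / g) := by
        rw [← pow_mul]; congr 1
        rw [← hga]
        rw [Nat.mul_comm g a, Nat.mul_assoc, Nat.mul_div_cancel' hdk, Nat.mul_comm a k]
    _ = 1 := by rw [hu, one_pow]
  · intro hw
    have hζa : IsPrimitiveRoot (ζ ^ g) a := IsPrimitiveRoot.pow hm hζ hga.symm
    have : NeZero a := ⟨ha.ne'⟩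
    obtain ⟨j, _, hj⟩ := hζa.eq_pow_of_pow_eq_one hw
    have hζ0 : ζ ≠ 0 := hζ.ne_zero hm.ne'
    have hζm : ζ ^ m = 1 := hζ.pow_eq_one
    have hbez : (g : ℤ) = m * Nat.gcdA m k + k * Nat.gcdB m k := Nat.gcd_eq_gcd_ab m k
    set A := Nat.gcdA m k
    set B := Nat.gcdB m k
    refine ⟨ζ ^ (B * j : ℤ), ?_, ?_⟩
    · have : (ζ ^ (B * j : ℤ)) ^ m = (ζ ^ (m : ℤ)) ^ (B * j) := by
        rw [← zpow_natCast ((ζ ^ (B*j:ℤ))) m, ← zpow_mul, ← zpow_mul, mul_comm]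
      rw [this, zpow_natCast, hζm, one_zpow]
    · have hz : (ζ ^ (B * j : ℤ)) ^ k = ζ ^ ((k * B) * j : ℤ) := by
        rw [← zpow_natCast ((ζ ^ (B*j:ℤ))) k, ← zpow_mul]; ring_nf
      rw [hz]
      have : ((k * B) * j : ℤ) = g * j - (m * A) * j := by
        rw [hbez]; ring
      rw [this, zpow_sub₀ hζ0]
      have h1 : ζ ^ ((m * A) * j : ℤ) = 1 := by
        rw [mul_assoc, zpow_mul, zpow_natCast, hζm, one_zpow]
      rw [h1, div_one, zpow_mul, zpow_natCast, zpow_natCast, hj]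

/-- Counting the image of `w ↦ w + w⁻¹` on a set closed under inversion. -/
private lemma countImageAux {K : Type*} [Field K] [DecidableEq K] (S : Finset K)
    (h0 : ∀ w ∈ S, w ≠ 0) (hinv : ∀ w ∈ S, w⁻¹ ∈ S) :
    2 * (S.image (fun w => w + w⁻¹)).card
      = S.card + (S.filter (fun w => w = w⁻¹)).card := by
  classical
  set f : K → K := fun w => w + w⁻¹ with hf
  set T := S.image f with hT
  have hmem : ∀ x ∈ S, f x ∈ T := fun x hx => Finset.mem_image_of_mem f hx
  have hmem' : ∀ x ∈ S.filter (fun w => w = w⁻¹), f x ∈ T := fun x hx =>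
    Finset.mem_image_of_mem f (Finset.mem_filter.mp hx).1
  rw [Finset.card_eq_sum_card_fiberwise hmem,
    Finset.card_eq_sum_card_fiberwise hmem', ← Finset.sum_add_distrib]
  have key : ∀ v ∈ T, (S.filter (fun w => f w = v)).card
      + ((S.filter (fun w => w = w⁻¹)).filter (fun w => f w = v)).card = 2 := by
    intro v hv
    obtain ⟨w, hwS, hwv⟩ := Finset.mem_image.mp hv
    have hw0 : w ≠ 0 := h0 w hwS
    have hfib : S.filter (fun u => f u = v) = {w, w⁻¹} := by
      ext u
      simp only [Finset.mem_filter, Finset.mem_insert, Finset.mem_singleton]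
      constructor
      · rintro ⟨huS, huv⟩
        have hu0 : u ≠ 0 := h0 u huS
        have huw : u + u⁻¹ = w + w⁻¹ := huv.trans hwv.symm
        have hu1 : u * u⁻¹ = 1 := mul_inv_cancel₀ hu0
        have hw1 : w * w⁻¹ = 1 := mul_inv_cancel₀ hw0
        have hkey : (u - w) * (u - w⁻¹) = 0 := by
          linear_combination u * huw + hw1 - hu1
        rcases mul_eq_zero.mp hkey with h | h
        · exact Or.inl (sub_eq_zero.mp h)
        · exact Or.inr (sub_eq_zero.mp h)
      · rintro (rfl | rfl)
        · exact ⟨hwS, hwv⟩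
        · refine ⟨hinv w hwS, ?_⟩
          rw [← hwv]; simp [f, inv_inv, add_comm]
    have hfibf : (S.filter (fun w => w = w⁻¹)).filter (fun u => f u = v)
        = (S.filter (fun u => f u = v)).filter (fun w => w = w⁻¹) := by
      simp [Finset.filter_filter, and_comm]
    rw [hfibf, hfib]
    by_cases hww : w = w⁻¹
    · have h1 : ({w, w⁻¹} : Finset K) = {w} := by rw [← hww]; simp
      rw [h1, Finset.filter_singleton, if_pos hww, Finset.card_singleton]
    · have h2 : ¬ (w⁻¹ = w⁻¹⁻¹) := by rw [inv_inv]; exact fun h => hww h.symm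
      rw [Finset.filter_insert, if_neg hww, Finset.filter_singleton, if_neg h2,
        Finset.card_insert_of_notMem (by simpa using hww), Finset.card_singleton,
        Finset.card_empty]
  rw [Finset.sum_congr rfl key, Finset.sum_const, smul_eq_mul, mul_comm]

private lemma aevalDickson {K : Type*} [CommRing K] (x : K) (k : ℕ) :
    Polynomial.aeval x (Polynomial.dickson 1 (1 : ℤ) k)
      = Polynomial.eval x (Polynomial.dickson 1 (1 : K) k) := by
  rw [Polynomial.aeval_def, ← Polynomial.eval_map, Polynomial.map_dickson, map_one]

/-- Fixed points of the `q`-power map in an `F`-algebra field, `q = |F|`. -/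
private lemma fixedFieldAux {F : Type} [Field F] [Fintype F] {Ω : Type*} [Field Ω] [Algebra F Ω]
    (z : Ω) (hz : z ^ (Fintype.card F) = z) : ∃ x : F, algebraMap F Ω x = z := by
  classical
  set q := Fintype.card F with hq
  have hq2 : 1 < q := Fintype.one_lt_card
  set P : Polynomial Ω := X ^ q - X with hP
  have hP0 : P ≠ 0 := FiniteField.X_pow_card_sub_X_ne_zero Ω hq2
  have hPdeg : P.natDegree = q := FiniteField.X_pow_card_sub_X_natDegree_eq Ω hq2
  have hφinj : Function.Injective (algebraMap F Ω) := (algebraMap F Ω).injective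
  set Fr : Finset Ω := Finset.univ.image (algebraMap F Ω) with hFr
  have hFrcard : Fr.card = q := by
    rw [hFr, Finset.card_image_of_injective _ hφinj, Finset.card_univ]
  by_contra hcon
  push_neg at hcon
  have hzFr : z ∉ Fr := by
    intro hzin
    obtain ⟨x, _, hx⟩ := Finset.mem_image.mp hzin
    exact hcon x hx
  have hsub : insert z Fr ⊆ P.roots.toFinset := by
    intro w hw
    rw [Multiset.mem_toFinset, Polynomial.mem_roots']
    refine ⟨hP0, ?_⟩
    have hwq : w ^ q = w := by
      rcases Finset.mem_insert.mp hw with rfl | hw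
      · exact hz
      · obtain ⟨x, _, rfl⟩ := Finset.mem_image.mp hw
        rw [← map_pow, FiniteField.pow_card]
    simp [P, Polynomial.IsRoot, hwq]
  have : q + 1 ≤ q := by
    calc q + 1 = (insert z Fr).card := by rw [Finset.card_insert_of_notMem hzFr, hFrcard]
    _ ≤ P.roots.toFinset.card := Finset.card_le_card hsub
    _ ≤ Multiset.card P.roots := Multiset.toFinset_card_le _
    _ ≤ P.natDegree := Polynomial.card_roots' P
    _ = q := hPdeg
  omega

private lemma gcd_two_eq {m : ℕ} : Nat.gcd m 2 = if Even m then 2 else 1 := by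
  rcases Nat.even_or_odd m with h | h
  · rw [if_pos h, Nat.gcd_comm, Nat.gcd_eq_left (even_iff_two_dvd.mp h)]
  · rw [if_neg (Nat.not_even_iff_odd.mpr h)]
    rcases (Nat.dvd_prime Nat.prime_two).mp (Nat.gcd_dvd_right m 2) with h1 | h2
    · exact h1
    · exfalso
      exact (Nat.not_even_iff_odd.mpr h) (even_iff_two_dvd.mpr (h2 ▸ Nat.gcd_dvd_left m 2))

/-- the value set of the Dickson polynomial map over `F_q` has
cardinality `a/2 + b/2 + η(k,q)`. -/
theorem stmt_1 (p n q k : ℕ) (hp : p.Prime) (hn : 0 < n) (hq : q = p ^ n) (hk : 0 < k)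
    (F : Type) [Field F] [Fintype F] (hF : Fintype.card F = q)
    (a b : ℕ) (ha : a = (q - 1) / Nat.gcd (q - 1) k) (hb : b = (q + 1) / Nat.gcd (q + 1) k)
    (η : ℚ) (hη : η = if Nat.gcd a 2 = Nat.gcd b 2 then 0 else 1 / 2) :
    ((Set.range fun x : F => Polynomial.aeval x (Polynomial.dickson 1 (1 : ℤ) k)).ncard : ℚ)
      = (a : ℚ) / 2 + (b : ℚ) / 2 + η := by
  classical
  haveI : Fact p.Prime := ⟨hp⟩
  have hq2 : 2 ≤ q := by
    rw [hq]
    calc 2 ≤ p := hp.two_le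
    _ ≤ p ^ n := Nat.le_self_pow hn.ne' p
  have hq1pos : 0 < q - 1 := by omega
  have hq1pos' : 0 < q + 1 := by omega
  -- characteristic of F is p
  have hcharF : CharP F p := by
    obtain ⟨r, hrinst⟩ : ∃ r, CharP F r := ⟨ringChar F, inferInstance⟩
    obtain ⟨m, hrp, hcard⟩ := FiniteField.card F r
    have hr : r = p := by
      have h1 : r ∣ p ^ n := by
        rw [← hq, ← hF, hcard]
        exact dvd_pow_self r (by exact_mod_cast m.pos.ne')
      exact ((Nat.prime_dvd_prime_iff_eq hrp hp).mp (hrp.dvd_of_dvd_pow h1))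
    rwa [← hr]
  set Ω := AlgebraicClosure F with hΩ
  have hφinj : Function.Injective (algebraMap F Ω) := (algebraMap F Ω).injective
  haveI : CharP Ω p := charP_of_injective_algebraMap hφinj p
  set φ := algebraMap F Ω with hφ
  -- p does not divide q-1 nor q+1
  have hpq : p ∣ q := hq ▸ dvd_pow_self p hn.ne'
  have hpd1 : ¬ p ∣ q - 1 := by
    intro h
    have h2 := Nat.dvd_sub hpq h
    rw [show q - (q - 1) = 1 by omega] at h2
    exact hp.one_lt.ne' (Nat.dvd_one.mp h2)
  have hpd2 : ¬ p ∣ q + 1 := by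
    intro h
    have h2 := Nat.dvd_sub h hpq
    rw [show q + 1 - q = 1 by omega] at h2
    exact hp.one_lt.ne' (Nat.dvd_one.mp h2)
  haveI hnz1 : NeZero ((q - 1 : ℕ) : Ω) := ⟨fun h => hpd1 ((CharP.cast_eq_zero_iff Ω p _).mp h)⟩
  haveI hnz2 : NeZero ((q + 1 : ℕ) : Ω) := ⟨fun h => hpd2 ((CharP.cast_eq_zero_iff Ω p _).mp h)⟩
  obtain ⟨ζ₁, hζ₁⟩ := HasEnoughRootsOfUnity.exists_primitiveRoot Ω (q - 1)
  obtain ⟨ζ₂, hζ₂⟩ := HasEnoughRootsOfUnity.exists_primitiveRoot Ω (q + 1)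
  -- divisibility facts
  have ha_dvd : a ∣ q - 1 := ha ▸ Nat.div_dvd_of_dvd (Nat.gcd_dvd_left _ _)
  have hb_dvd : b ∣ q + 1 := hb ▸ Nat.div_dvd_of_dvd (Nat.gcd_dvd_left _ _)
  have ha_pos : 0 < a := ha ▸ Nat.div_pos
    (Nat.le_of_dvd hq1pos (Nat.gcd_dvd_left _ _)) (Nat.gcd_pos_of_pos_left _ hq1pos)
  have hb_pos : 0 < b := hb ▸ Nat.div_pos
    (Nat.le_of_dvd hq1pos' (Nat.gcd_dvd_left _ _)) (Nat.gcd_pos_of_pos_left _ hq1pos')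
  -- the relevant finsets
  set T : Finset Ω := Polynomial.nthRootsFinset (q - 1) (1 : Ω) ∪ Polynomial.nthRootsFinset (q + 1) (1 : Ω)
    with hT
  set Sab : Finset Ω := Polynomial.nthRootsFinset a (1 : Ω) ∪ Polynomial.nthRootsFinset b (1 : Ω) with hSab
  set I : Finset Ω := Sab.image (fun w => w + w⁻¹) with hI
  have hTk : T.image (fun u => u ^ k) = Sab := by
    rw [hT, Finset.image_union, powImageAux hq1pos hζ₁, powImageAux hq1pos' hζ₂, ← ha, ← hb]
  have hSab0 : ∀ w ∈ Sab, w ≠ 0 := by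
    intro w hw hw0
    rcases Finset.mem_union.mp hw with h | h
    · rw [Polynomial.mem_nthRootsFinset ha_pos, hw0, zero_pow ha_pos.ne'] at h
      exact zero_ne_one h
    · rw [Polynomial.mem_nthRootsFinset hb_pos, hw0, zero_pow hb_pos.ne'] at h
      exact zero_ne_one h
  have hSabinv : ∀ w ∈ Sab, w⁻¹ ∈ Sab := by
    intro w hw
    rcases Finset.mem_union.mp hw with h | h
    · refine Finset.mem_union_left _ ?_
      rw [Polynomial.mem_nthRootsFinset ha_pos] at h ⊢
      rw [inv_pow, h, inv_one]
    · refine Finset.mem_union_right _ ?_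
      rw [Polynomial.mem_nthRootsFinset hb_pos] at h ⊢
      rw [inv_pow, h, inv_one]
  -- main set identity
  have hT0 : ∀ u ∈ T, u ≠ 0 := by
    intro u hu hu0
    rcases Finset.mem_union.mp hu with h | h
    · rw [Polynomial.mem_nthRootsFinset hq1pos, hu0, zero_pow hq1pos.ne'] at h
      exact zero_ne_one h
    · rw [Polynomial.mem_nthRootsFinset hq1pos', hu0, zero_pow hq1pos'.ne'] at h
      exact zero_ne_one h
  have hdick : ∀ u : Ω, u ≠ 0 →
      Polynomial.eval (u + u⁻¹) (Polynomial.dickson 1 (1 : Ω) k) = u ^ k + (u⁻¹) ^ k :=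
    fun u hu => Polynomial.dickson_one_one_eval_add_inv u u⁻¹ (mul_inv_cancel₀ hu) k
  have haev2 : ∀ x : F, φ (Polynomial.aeval x (Polynomial.dickson 1 (1 : ℤ) k))
      = Polynomial.eval (φ x) (Polynomial.dickson 1 (1 : Ω) k) := by
    intro x
    rw [hφ, ← Polynomial.aeval_algebraMap_apply Ω x (Polynomial.dickson 1 (1 : ℤ) k),
      Polynomial.aeval_def, ← Polynomial.eval_map, Polynomial.map_dickson, map_one]
  have hstep1 : ∀ x : F, ∃ u ∈ T, u + u⁻¹ = φ x := by
    intro x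
    set s := φ x with hs
    obtain ⟨u, hu⟩ := IsAlgClosed.exists_root (C (1 : Ω) * X ^ 2 + C (-s) * X + C 1)
      (by rw [Polynomial.degree_quadratic one_ne_zero]; decide)
    have hroot : u ^ 2 - s * u + 1 = 0 := by
      have h := hu
      simp only [Polynomial.IsRoot, Polynomial.eval_add, Polynomial.eval_mul,
        Polynomial.eval_pow, Polynomial.eval_C, Polynomial.eval_X, one_mul] at h
      linear_combination h
    have hu0 : u ≠ 0 := by
      intro h
      rw [h] at hroot
      simp at hroot
    have hu1 : u * u⁻¹ = 1 := mul_inv_cancel₀ hu0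
    have hsum : u + u⁻¹ = s := by
      have hgoal : (u + u⁻¹ - s) * u = 0 := by linear_combination hroot + hu1
      rcases mul_eq_zero.mp hgoal with h | h
      · linear_combination h
      · exact absurd h hu0
    have hsq : s ^ q = s := by rw [hs, hφ, ← map_pow, ← hF, FiniteField.pow_card]
    have hneg1 : (-1 : Ω) ^ q = -1 := by rw [hq]; exact neg_one_pow_char_pow Ω p n
    have h0 : (u ^ 2 - s * u + 1 : Ω) ^ q = 0 := by
      rw [hroot]
      exact zero_pow (by omega)
    have e1 : (u ^ 2 - s * u + 1 : Ω) ^ q = (u ^ 2) ^ q + (-(s * u)) ^ q + (1 : Ω) ^ q := by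
      rw [show (u ^ 2 - s * u + 1 : Ω) = u ^ 2 + (-(s * u)) + 1 by ring, hq,
        add_pow_char_pow, add_pow_char_pow]
    have h2 : (u ^ 2) ^ q = (u ^ q) ^ 2 := by rw [← pow_mul, ← pow_mul, mul_comm]
    have h3 : (-(s * u)) ^ q = -(s * u ^ q) := by
      rw [show (-(s * u) : Ω) = (-1) * (s * u) by ring, mul_pow, hneg1, mul_pow, hsq]
      ring
    rw [e1, h2, h3, one_pow] at h0
    have hfac : (u ^ q - u) * (u ^ q - u⁻¹) = 0 := by
      linear_combination h0 - (u ^ q) * hsum + hu1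
    rcases mul_eq_zero.mp hfac with h | h
    · refine ⟨u, Finset.mem_union_left _ ((Polynomial.mem_nthRootsFinset hq1pos (1 : Ω)).mpr ?_), hsum⟩
      have hqu : u ^ q = u := sub_eq_zero.mp h
      have hstep : u ^ (q - 1) * u = 1 * u := by
        rw [← pow_succ, show q - 1 + 1 = q by omega, hqu, one_mul]
      exact mul_right_cancel₀ hu0 hstep
    · refine ⟨u, Finset.mem_union_right _ ((Polynomial.mem_nthRootsFinset hq1pos' (1 : Ω)).mpr ?_), hsum⟩
      have hqu : u ^ q = u⁻¹ := sub_eq_zero.mp h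
      rw [pow_succ, hqu, inv_mul_cancel₀ hu0]
  have hstep2 : ∀ u ∈ T, ∃ x : F, φ x = u + u⁻¹ := by
    intro u huT
    have hu0 : u ≠ 0 := hT0 u huT
    have hvq : (u + u⁻¹) ^ q = u ^ q + (u⁻¹) ^ q := by
      rw [hq]
      exact add_pow_char_pow u u⁻¹ p n
    have hfix : (u + u⁻¹) ^ q = u + u⁻¹ := by
      rcases Finset.mem_union.mp huT with h | h
      · rw [Polynomial.mem_nthRootsFinset hq1pos] at h
        have hqu : u ^ q = u := by
          rw [show q = q - 1 + 1 by omega, pow_succ, h, one_mul]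
        rw [hvq, inv_pow, hqu]
      · rw [Polynomial.mem_nthRootsFinset hq1pos'] at h
        have hqu : u ^ q = u⁻¹ := by
          have : u ^ q * u = 1 := by rw [← pow_succ, h]
          exact eq_inv_of_mul_eq_one_left this
        rw [hvq, inv_pow, hqu, inv_inv, add_comm]
    obtain ⟨x, hx⟩ := fixedFieldAux (u + u⁻¹) (by rw [hF]; exact hfix)
    exact ⟨x, hx⟩
  have hmain : φ '' (Set.range fun x : F => Polynomial.aeval x (Polynomial.dickson 1 (1 : ℤ) k))
      = ↑I := by
    ext z
    simp only [Set.mem_image, Set.mem_range, Finset.coe_image, exists_exists_eq_and, hI,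
      Finset.mem_coe, Finset.mem_image]
    constructor
    · rintro ⟨x, rfl⟩
      obtain ⟨u, huT, hsum⟩ := hstep1 x
      have hu0 : u ≠ 0 := hT0 u huT
      refine ⟨u ^ k, ?_, ?_⟩
      · rw [← hTk]
        exact Finset.mem_image_of_mem _ huT
      · rw [haev2 x, ← hsum, hdick u hu0, inv_pow]
    · rintro ⟨w, hwS, rfl⟩
      rw [← hTk] at hwS
      obtain ⟨u, huT, rfl⟩ := Finset.mem_image.mp hwS
      have hu0 : u ≠ 0 := hT0 u huT
      obtain ⟨x, hx⟩ := hstep2 u huT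
      exact ⟨x, by rw [haev2 x, hx, hdick u hu0, inv_pow]⟩
  -- cardinality computations
  have h2I : 2 * I.card = Sab.card + (Sab.filter (fun w => w = w⁻¹)).card :=
    countImageAux Sab hSab0 hSabinv
  have hacard : (Polynomial.nthRootsFinset a (1 : Ω)).card = a :=
    IsPrimitiveRoot.card_nthRootsFinset (IsPrimitiveRoot.pow (b := a) hq1pos hζ₁
      (by rw [ha, Nat.mul_div_cancel' (Nat.gcd_dvd_left _ _)]))
  have hbcard : (Polynomial.nthRootsFinset b (1 : Ω)).card = b :=
    IsPrimitiveRoot.card_nthRootsFinset (IsPrimitiveRoot.pow (b := b) hq1pos' hζ₂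
      (by rw [hb, Nat.mul_div_cancel' (Nat.gcd_dvd_left _ _)]))
  have hgcd_pos : 0 < Nat.gcd a b := Nat.gcd_pos_of_pos_left _ ha_pos
  have hinter : Polynomial.nthRootsFinset a (1 : Ω) ∩ Polynomial.nthRootsFinset b (1 : Ω)
      = Polynomial.nthRootsFinset (Nat.gcd a b) (1 : Ω) := by
    ext w
    rw [Finset.mem_inter, Polynomial.mem_nthRootsFinset ha_pos,
      Polynomial.mem_nthRootsFinset hb_pos, Polynomial.mem_nthRootsFinset hgcd_pos]
    constructor
    · rintro ⟨h1, h2⟩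
      exact orderOf_dvd_iff_pow_eq_one.mp (Nat.dvd_gcd
        (orderOf_dvd_iff_pow_eq_one.mpr h1) (orderOf_dvd_iff_pow_eq_one.mpr h2))
    · intro h
      constructor
      · exact orderOf_dvd_iff_pow_eq_one.mp
          ((orderOf_dvd_iff_pow_eq_one.mpr h).trans (Nat.gcd_dvd_left a b))
      · exact orderOf_dvd_iff_pow_eq_one.mp
          ((orderOf_dvd_iff_pow_eq_one.mpr h).trans (Nat.gcd_dvd_right a b))
  have hintercard : (Polynomial.nthRootsFinset (Nat.gcd a b) (1 : Ω)).card = Nat.gcd a b := by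
    have hd : Nat.gcd a b ∣ q - 1 := (Nat.gcd_dvd_left a b).trans ha_dvd
    exact IsPrimitiveRoot.card_nthRootsFinset (IsPrimitiveRoot.pow (b := Nat.gcd a b) hq1pos hζ₁
      (by rw [Nat.div_mul_cancel hd]))
  have hSabcard : Sab.card + Nat.gcd a b = a + b := by
    rw [hSab]
    calc (Polynomial.nthRootsFinset a (1 : Ω) ∪ Polynomial.nthRootsFinset b (1 : Ω)).card + Nat.gcd a b
        = (Polynomial.nthRootsFinset a (1 : Ω) ∪ Polynomial.nthRootsFinset b (1 : Ω)).card
          + (Polynomial.nthRootsFinset a (1 : Ω) ∩ Polynomial.nthRootsFinset b (1 : Ω)).card := by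
          rw [hinter, hintercard]
      _ = (Polynomial.nthRootsFinset a (1 : Ω)).card + (Polynomial.nthRootsFinset b (1 : Ω)).card :=
          Finset.card_union_add_card_inter _ _
      _ = a + b := by rw [hacard, hbcard]
  -- the fixed-point count
  have hfixcard : (Sab.filter (fun w => w = w⁻¹)).card = if Even a ∨ Even b then 2 else 1 := by
    have h1mem : (1 : Ω) ∈ Sab :=
      Finset.mem_union_left _ ((Polynomial.mem_nthRootsFinset ha_pos (1 : Ω)).mpr (one_pow a))
    have wcases : ∀ w ∈ Sab, w = w⁻¹ → w = 1 ∨ w = -1 := by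
      intro w hwS hww
      have hw0 := hSab0 w hwS
      have h1 : w * w⁻¹ = 1 := mul_inv_cancel₀ hw0
      rw [← hww] at h1
      have hsq : (w - 1) * (w + 1) = 0 := by linear_combination h1
      rcases mul_eq_zero.mp hsq with h | h
      · exact Or.inl (by linear_combination h)
      · exact Or.inr (by linear_combination h)
    by_cases hev : Even a ∨ Even b
    · rw [if_pos hev]
      have hq2dvd : ¬ 2 ∣ q := by
        have : 2 ∣ q - 1 ∨ 2 ∣ q + 1 := by
          rcases hev with h | h
          · exact Or.inl ((even_iff_two_dvd.mp h).trans ha_dvd)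
          · exact Or.inr ((even_iff_two_dvd.mp h).trans hb_dvd)
        omega
      have hp2 : p ≠ 2 := fun h => hq2dvd (h ▸ hpq)
      haveI : Fact (2 < p) := ⟨lt_of_le_of_ne hp.two_le (Ne.symm hp2)⟩
      have hne : (-1 : Ω) ≠ 1 := CharP.neg_one_ne_one Ω p
      have hm1 : (-1 : Ω) ∈ Sab := by
        rcases hev with h | h
        · exact Finset.mem_union_left _
            ((Polynomial.mem_nthRootsFinset ha_pos (1 : Ω)).mpr (h.neg_one_pow))
        · exact Finset.mem_union_right _
            ((Polynomial.mem_nthRootsFinset hb_pos (1 : Ω)).mpr (h.neg_one_pow))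
      have hfeq : Sab.filter (fun w => w = w⁻¹) = {1, -1} := by
        ext w
        simp only [Finset.mem_filter, Finset.mem_insert, Finset.mem_singleton]
        constructor
        · rintro ⟨hwS, hww⟩
          exact wcases w hwS hww
        · rintro (rfl | rfl)
          · exact ⟨h1mem, inv_one.symm⟩
          · exact ⟨hm1, inv_neg_one.symm⟩
      rw [hfeq, Finset.card_insert_of_notMem
        (by simp only [Finset.mem_singleton]; exact fun h => hne h.symm),
        Finset.card_singleton]
    · rw [if_neg hev]
      push_neg at hev
      have hOa : Odd a := Nat.not_even_iff_odd.mp hev.1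
      have hOb : Odd b := Nat.not_even_iff_odd.mp hev.2
      have hfeq : Sab.filter (fun w => w = w⁻¹) = {1} := by
        ext w
        simp only [Finset.mem_filter, Finset.mem_singleton]
        constructor
        · rintro ⟨hwS, hww⟩
          rcases wcases w hwS hww with rfl | rfl
          · rfl
          · rcases Finset.mem_union.mp hwS with h | h
            · rw [Polynomial.mem_nthRootsFinset ha_pos, hOa.neg_one_pow] at h
              exact h
            · rw [Polynomial.mem_nthRootsFinset hb_pos, hOb.neg_one_pow] at h
              exact h
        · rintro rfl
          exact ⟨h1mem, inv_one.symm⟩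
      rw [hfeq, Finset.card_singleton]
  -- gcd a b value
  have hgcdab : Nat.gcd a b = if Even a ∧ Even b then 2 else 1 := by
    have hdvd2 : Nat.gcd a b ∣ 2 := by
      have h1 : Nat.gcd a b ∣ Nat.gcd (q - 1) (q + 1) :=
        Nat.dvd_gcd ((Nat.gcd_dvd_left a b).trans ha_dvd) ((Nat.gcd_dvd_right a b).trans hb_dvd)
      have h2 : Nat.gcd (q - 1) (q + 1) ∣ 2 := by
        have := Nat.dvd_sub (Nat.gcd_dvd_right (q - 1) (q + 1)) (Nat.gcd_dvd_left (q - 1) (q + 1))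
        rwa [show q + 1 - (q - 1) = 2 by omega] at this
      exact h1.trans h2
    by_cases hev : Even a ∧ Even b
    · rw [if_pos hev]
      refine Nat.dvd_antisymm hdvd2 (Nat.dvd_gcd ?_ ?_)
      · exact even_iff_two_dvd.mp hev.1
      · exact even_iff_two_dvd.mp hev.2
    · rw [if_neg hev]
      rcases (Nat.dvd_prime Nat.prime_two).mp hdvd2 with h1 | h2
      · exact h1
      · exfalso
        exact hev ⟨even_iff_two_dvd.mpr (h2 ▸ Nat.gcd_dvd_left a b),
          even_iff_two_dvd.mpr (h2 ▸ Nat.gcd_dvd_right a b)⟩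
  -- put everything together
  have hNcard : ((Set.range fun x : F =>
      Polynomial.aeval x (Polynomial.dickson 1 (1 : ℤ) k)).ncard : ℚ) = I.card := by
    rw [← Set.ncard_image_of_injective _ hφinj, hmain, Set.ncard_coe_finset]
  rw [hNcard, hη]
  have hkey : 2 * I.card + Nat.gcd a b = a + b + (if Even a ∨ Even b then 2 else 1) := by
    rw [← hfixcard, ← hSabcard]; omega
  rw [hgcdab] at hkey
  have hga2 : Nat.gcd a 2 = if Even a then 2 else 1 := gcd_two_eq
  have hgb2 : Nat.gcd b 2 = if Even b then 2 else 1 := gcd_two_eq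
  by_cases hA : Even a <;> by_cases hB : Even b
  · rw [if_pos ⟨hA, hB⟩, if_pos (Or.inl hA)] at hkey
    rw [hga2, hgb2, if_pos hA, if_pos hB, if_pos rfl]
    have h2 : 2 * I.card = a + b := by omega
    have h3 : (2 : ℚ) * I.card = a + b := by exact_mod_cast h2
    linarith
  · rw [if_neg (by tauto), if_pos (Or.inl hA)] at hkey
    rw [hga2, hgb2, if_pos hA, if_neg hB, if_neg (by norm_num)]
    have h2 : 2 * I.card = a + b + 1 := by omega
    have h3 : (2 : ℚ) * I.card = a + b + 1 := by exact_mod_cast h2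
    linarith
  · rw [if_neg (by tauto), if_pos (Or.inr hB)] at hkey
    rw [hga2, hgb2, if_neg hA, if_pos hB, if_neg (by norm_num)]
    have h2 : 2 * I.card = a + b + 1 := by omega
    have h3 : (2 : ℚ) * I.card = a + b + 1 := by exact_mod_cast h2
    linarith
  · rw [if_neg (by tauto), if_neg (by tauto)] at hkey
    rw [hga2, hgb2, if_neg hA, if_neg hB, if_pos rfl]
    have h2 : 2 * I.card = a + b := by omega
    have h3 : (2 : ℚ) * I.card = a + b := by exact_mod_cast h2
    linarith
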